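/- Let L, η ∈ ℂ with |η| ≤ Re(L) − (Im L)²/3 − 1/4. Then for all x, y ∈ ℝ with x²+y²<1 and all ρ, σ ∈ ℝ with σ ≤ −(1+ρ²)/2, one has σ − ρ² + x² − y² + 2ρ·Im(L) − 2x·Re(η) + 2y·Im(η) − 2Re(L) < 0. -/

import Mathlib

/-- admissibility inequality in the starlikeness proof. -/
theorem admissibility_two (L η : ℂ)
    (hcond : ‖η‖ ≤ L.re - (L.im) ^ 2 / 3 - 1 / 4)
    (x y : ℝ) (hxy : x ^ 2 + y ^ 2 < 1)
    (ρ σ : ℝ) (hσ : σ ≤ -(1 + ρ ^ 2) / 2) :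
    σ - ρ ^ 2 + x ^ 2 - y ^ 2 + 2 * ρ * L.im - 2 * x * η.re + 2 * y * η.im - 2 * L.re < 0 := by
  have hA : ‖η‖ ^ 2 = η.re ^ 2 + η.im ^ 2 := by
    rw [Complex.sq_norm, Complex.normSq_apply]; ring
  have hA0 : 0 ≤ ‖η‖ := norm_nonneg η
  have key : -2 * x * η.re + 2 * y * η.im ≤ 2 * ‖η‖ := by
    nlinarith [sq_nonneg (x * η.im + y * η.re), sq_nonneg (x * η.re - y * η.im + ‖η‖),
      sq_nonneg (‖η‖ * x + η.re), sq_nonneg (‖η‖ * y - η.im),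
      sq_nonneg (‖η‖ - 1)]
  nlinarith [sq_nonneg (3 * ρ - 2 * L.im), key, hcond, hσ, hxy]
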